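/- For every integer m ≥ 0 and every integer ℓ ≥ 0, 2^m · m! · r_{m,ℓ} = ∑_{i=0}^{m} c(m+1, i+1) · r_{ℓ+i}, where c(n,k) is the unsigned Stirling number of the first kind. -/

import Mathlib

/-- `IsBPA m ℓ f` : `f` encodes a barred preferential arrangement of `[ℓ]` with `m` bars.
Each element of `[ℓ]` is assigned a section (one of the `m + 1` sections determined by the
`m` bars) together with a rank inside its section (ties are allowed: elements of the same
section with the same rank form a block); within each section the set of ranks actually used
must be an initial segment `{0, …, t-1}`, so that `f` determines, for each section, an
ordered partition of the elements assigned to it into nonempty blocks. -/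
def IsBPA (m ℓ : ℕ) (f : Fin ℓ → Fin (m + 1) × Fin ℓ) : Prop :=
  ∀ x : Fin ℓ, ∀ r : Fin ℓ, r < (f x).2 → ∃ y : Fin ℓ, (f y).1 = (f x).1 ∧ (f y).2 = r

instance (m ℓ : ℕ) : DecidablePred (IsBPA m ℓ) := fun f => by unfold IsBPA; infer_instance

/-- `bpa m ℓ` : the number of barred preferential arrangements of `[ℓ]` with `m` bars.
In particular `bpa 0 ℓ` is the number of preferential arrangements of `[ℓ]`
(the Fubini / ordered Bell number `r_ℓ`). -/
def bpa (m ℓ : ℕ) : ℕ :=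
  Fintype.card { f : Fin ℓ → Fin (m + 1) × Fin ℓ // IsBPA m ℓ f }

/-- The unsigned Stirling numbers of the first kind, `c(n, k)`: the number of permutations
of `n` elements having `k` cycles. -/
def stirling1 : ℕ → ℕ → ℕ
  | 0, 0 => 1
  | 0, _ + 1 => 0
  | _ + 1, 0 => 0
  | n + 1, k + 1 => n * stirling1 n (k + 1) + stirling1 n k


namespace BPAAux

open Finset

/-- The set of ranks used in section `s` by a raw encoding `g`. -/
def T {n : ℕ} (g : Fin n → ℕ × ℕ) (s : ℕ) : Finset ℕ :=
  (Finset.univ.filter (fun y => (g y).1 = s)).image (fun y => (g y).2)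

lemma mem_T {n : ℕ} {g : Fin n → ℕ × ℕ} {s q : ℕ} :
    q ∈ T g s ↔ ∃ y, (g y).1 = s ∧ (g y).2 = q := by
  simp [T, and_comm]

/-- ℕ-level version of the barred-preferential-arrangement condition. -/
def NBPA {n : ℕ} (g : Fin n → ℕ × ℕ) : Prop :=
  ∀ x q, q < (g x).2 → q ∈ T g ((g x).1)

/-- A downward-closed finset of naturals is an initial segment. -/
lemma downward_closed_eq_range (S : Finset ℕ) (h : ∀ r ∈ S, ∀ q < r, q ∈ S) :
    S = Finset.range S.card := by
  have hsub : S ⊆ Finset.range S.card := by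
    intro k hk
    have : Finset.range (k + 1) ⊆ S := by
      intro q hq
      simp only [Finset.mem_range] at hq
      rcases Nat.lt_succ_iff_lt_or_eq.mp hq with hlt | rfl
      · exact h k hk q hlt
      · exact hk
    have := Finset.card_le_card this
    simp only [Finset.card_range] at this
    simpa using this
  exact Finset.eq_of_subset_of_card_le hsub (by simp)

lemma T_eq_range {n : ℕ} {g : Fin n → ℕ × ℕ} (h : NBPA g) (s : ℕ) :
    T g s = Finset.range (T g s).card := by
  apply downward_closed_eq_range
  intro r hr q hq
  rcases mem_T.mp hr with ⟨y, hy1, hy2⟩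
  have := h y q (by omega)
  rwa [hy1] at this

lemma mem_T_iff_lt {n : ℕ} {g : Fin n → ℕ × ℕ} (h : NBPA g) {s q : ℕ} :
    q ∈ T g s ↔ q < (T g s).card := by
  conv_lhs => rw [T_eq_range h s]
  simp

lemma rk_lt_t {n : ℕ} {g : Fin n → ℕ × ℕ} (h : NBPA g) (x : Fin n) :
    (g x).2 < (T g ((g x).1)).card := by
  rw [← mem_T_iff_lt h]
  exact mem_T.mpr ⟨x, rfl, rfl⟩

lemma exists_rank {n : ℕ} {g : Fin n → ℕ × ℕ} (h : NBPA g) {s q : ℕ}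
    (hq : q < (T g s).card) : ∃ y, (g y).1 = s ∧ (g y).2 = q :=
  mem_T.mp ((mem_T_iff_lt h).mpr hq)

lemma t_le {n : ℕ} (g : Fin n → ℕ × ℕ) (s : ℕ) : (T g s).card ≤ n := by
  calc (T g s).card ≤ (Finset.univ.filter (fun y => (g y).1 = s)).card :=
        Finset.card_image_le
    _ ≤ (Finset.univ : Finset (Fin n)).card := Finset.card_le_card (Finset.filter_subset _ _)
    _ = n := by simp

lemma t_add_t_le {n : ℕ} (g : Fin n → ℕ × ℕ) {s s' : ℕ} (hss : s ≠ s') :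
    (T g s).card + (T g s').card ≤ n := by
  have h1 : (T g s).card ≤ (Finset.univ.filter (fun y => (g y).1 = s)).card :=
    Finset.card_image_le
  have h2 : (T g s').card ≤ (Finset.univ.filter (fun y => (g y).1 = s')).card :=
    Finset.card_image_le
  have hdisj : Disjoint (Finset.univ.filter (fun y : Fin n => (g y).1 = s))
      (Finset.univ.filter (fun y => (g y).1 = s')) := by
    apply Finset.disjoint_filter_filter'
    intro p hp hp' x hx
    exact absurd ((hp x hx).symm.trans (hp' x hx)) hss
  have := Finset.card_union_of_disjoint hdisj
  have hle : ((Finset.univ.filter (fun y : Fin n => (g y).1 = s)) ∪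
      (Finset.univ.filter (fun y => (g y).1 = s'))).card ≤ n := by
    calc _ ≤ (Finset.univ : Finset (Fin n)).card := Finset.card_le_card (by intro x _; simp)
      _ = n := by simp
  omega

/-- If two distinct elements share section and rank, the number of ranks used
in that section is less than `n`. -/
lemma t_lt_of_dup {n : ℕ} {g : Fin n → ℕ × ℕ} {x y : Fin n} (hxy : x ≠ y)
    (hg : g x = g y) : (T g ((g x).1)).card < n := by
  have himg : T g ((g x).1) =
      ((Finset.univ.filter (fun z => (g z).1 = (g x).1)).erase y).image (fun z => (g z).2) := by
    apply Finset.Subset.antisymm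
    · intro q hq
      rcases mem_T.mp hq with ⟨z, hz1, hz2⟩
      by_cases hzy : z = y
      · subst hzy
        refine Finset.mem_image.mpr ⟨x, ?_, ?_⟩
        · exact Finset.mem_erase.mpr ⟨hxy, by simp⟩
        · rw [hg]; exact hz2
      · exact Finset.mem_image.mpr ⟨z, Finset.mem_erase.mpr ⟨hzy, by simp [hz1]⟩, hz2⟩
    · intro q hq
      rcases Finset.mem_image.mp hq with ⟨z, hz, hz2⟩
      have := (Finset.mem_erase.mp hz).2
      simp only [Finset.mem_filter] at this
      exact mem_T.mpr ⟨z, this.2, hz2⟩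
  have hy : y ∈ Finset.univ.filter (fun z : Fin n => (g z).1 = (g x).1) := by
    simp [← hg]
  calc (T g ((g x).1)).card ≤ ((Finset.univ.filter (fun z => (g z).1 = (g x).1)).erase y).card := by
        rw [himg]; exact Finset.card_image_le
    _ < (Finset.univ.filter (fun z : Fin n => (g z).1 = (g x).1)).card :=
        Finset.card_erase_lt_of_mem hy
    _ ≤ n := by
        calc _ ≤ (Finset.univ : Finset (Fin n)).card := Finset.card_le_card (by intro a _; simp)
          _ = n := by simp

lemma t_eq_zero_iff {n : ℕ} {g : Fin n → ℕ × ℕ} {s : ℕ} :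
    (T g s).card = 0 ↔ ∀ x, (g x).1 ≠ s := by
  rw [Finset.card_eq_zero]
  constructor
  · intro h x hx
    have : (g x).2 ∈ T g s := mem_T.mpr ⟨x, hx, rfl⟩
    simp [h] at this
  · intro h
    rw [Finset.eq_empty_iff_forall_notMem]
    intro q hq
    rcases mem_T.mp hq with ⟨y, hy, _⟩
    exact h y hy

end BPAAux

namespace BPAAux

def rawOf {M n : ℕ} (f : Fin n → Fin (M + 1) × Fin n) : Fin n → ℕ × ℕ :=
  fun x => ((f x).1, (f x).2)

def pack {M n : ℕ} (g : Fin n → ℕ × ℕ) (h1 : ∀ x, (g x).1 < M + 1)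
    (h2 : ∀ x, (g x).2 < n) : Fin n → Fin (M + 1) × Fin n :=
  fun x => (⟨(g x).1, h1 x⟩, ⟨(g x).2, h2 x⟩)

@[simp] lemma rawOf_pack {M n : ℕ} (g : Fin n → ℕ × ℕ) (h1 h2) :
    rawOf (M := M) (pack g h1 h2) = g := by
  funext x
  simp [rawOf, pack]

lemma pack_rawOf {M n : ℕ} (f : Fin n → Fin (M + 1) × Fin n) (h1 h2) :
    pack (rawOf f) h1 h2 = f := by
  rfl

lemma isBPA_iff_NBPA {M n : ℕ} (f : Fin n → Fin (M + 1) × Fin n) :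
    IsBPA M n f ↔ NBPA (rawOf f) := by
  constructor
  · intro h x q hq
    simp only [rawOf] at hq ⊢
    have hqn : q < n := lt_trans hq (f x).2.isLt
    rcases h x ⟨q, hqn⟩ hq with ⟨y, hy1, hy2⟩
    exact mem_T.mpr ⟨y, by simp [rawOf, hy1], by simp [rawOf, hy2]⟩
  · intro h x r hr
    have := h x r.val (by exact_mod_cast hr)
    rcases mem_T.mp this with ⟨y, hy1, hy2⟩
    refine ⟨y, ?_, ?_⟩
    · simp only [rawOf] at hy1; exact_mod_cast Fin.ext hy1
    · simp only [rawOf] at hy2; exact_mod_cast Fin.ext hy2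

lemma NBPA_of_isBPA {M n : ℕ} {f : Fin n → Fin (M + 1) × Fin n} (h : IsBPA M n f) :
    NBPA (rawOf f) := (isBPA_iff_NBPA f).mp h

lemma isBPA_pack {M n : ℕ} {g : Fin n → ℕ × ℕ} (h1 : ∀ x, (g x).1 < M + 1)
    (h2 : ∀ x, (g x).2 < n) (h : NBPA g) : IsBPA M n (pack g h1 h2) := by
  rw [isBPA_iff_NBPA, rawOf_pack]
  exact h

/-- Relabelling sections preserves the `NBPA` condition. -/
lemma NBPA_relabel {n : ℕ} {g : Fin n → ℕ × ℕ} (φ : ℕ → ℕ) (h : NBPA g) :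
    NBPA (fun x => (φ (g x).1, (g x).2)) := by
  intro x q hq
  simp only at hq
  rcases mem_T.mp (h x q hq) with ⟨y, hy1, hy2⟩
  exact mem_T.mpr ⟨y, by simp [hy1], by simpa using hy2⟩

end BPAAux

namespace BPAAux

open Finset

/-! ### The forward map: replace bar `j` (new element gets rank `u - 1`) -/

def Fwd (j u : ℕ) (p : ℕ × ℕ) : ℕ × ℕ :=
  if p.1 ≤ j then p else if p.1 = j + 1 then (j, p.2 + u) else (p.1 - 1, p.2)

def fwdRaw {n : ℕ} (g : Fin n → ℕ × ℕ) (j u : ℕ) : Fin (n + 1) → ℕ × ℕ :=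
  Fin.lastCases (j, u - 1) (fun x => Fwd j u (g x))

@[simp] lemma fwdRaw_last {n : ℕ} (g : Fin n → ℕ × ℕ) (j u : ℕ) :
    fwdRaw g j u (Fin.last n) = (j, u - 1) := Fin.lastCases_last

@[simp] lemma fwdRaw_castSucc {n : ℕ} (g : Fin n → ℕ × ℕ) (j u : ℕ) (x : Fin n) :
    fwdRaw g j u x.castSucc = Fwd j u (g x) := Fin.lastCases_castSucc x

/-! ### The inverse map: split at the block/rank of the last element -/

def Inv (s r : ℕ) (p : ℕ × ℕ) : ℕ × ℕ :=
  if p.1 < s then p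
  else if p.1 = s then (if p.2 ≤ r then p else (s + 1, p.2 - r - 1))
  else (p.1 + 1, p.2)

def invRaw {n : ℕ} (g' : Fin (n + 1) → ℕ × ℕ) : Fin n → ℕ × ℕ :=
  fun x => Inv (g' (Fin.last n)).1 (g' (Fin.last n)).2 (g' x.castSucc)

def sqRaw (j : ℕ) {n : ℕ} (g : Fin n → ℕ × ℕ) : Fin n → ℕ × ℕ :=
  fun x => (if (g x).1 < j then (g x).1 else (g x).1 - 1, (g x).2)

def liftRaw (j : ℕ) {n : ℕ} (g : Fin n → ℕ × ℕ) : Fin n → ℕ × ℕ :=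
  fun x => (if (g x).1 < j then (g x).1 else (g x).1 + 1, (g x).2)

lemma sqRaw_NBPA (j : ℕ) {n : ℕ} {g : Fin n → ℕ × ℕ} (h : NBPA g) : NBPA (sqRaw j g) :=
  NBPA_relabel (fun s => if s < j then s else s - 1) h

lemma liftRaw_NBPA (j : ℕ) {n : ℕ} {g : Fin n → ℕ × ℕ} (h : NBPA g) : NBPA (liftRaw j g) :=
  NBPA_relabel (fun s => if s < j then s else s + 1) h

/-! ### Bounds for the forward map -/

lemma fwdRaw_sec_lt {n m : ℕ} {g : Fin n → ℕ × ℕ} {j u : ℕ} (hj : j < m + 1)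
    (hs : ∀ x, (g x).1 < m + 2) : ∀ x, (fwdRaw g j u x).1 < m + 1 := by
  intro x
  cases x using Fin.lastCases with
  | last => simpa using hj
  | cast x =>
    have := hs x
    simp only [fwdRaw_castSucc, Fwd]
    split_ifs <;> (try simp) <;> omega

lemma fwdRaw_rk_lt {n : ℕ} {g : Fin n → ℕ × ℕ} {j u : ℕ} (hb : NBPA g)
    (hr : ∀ x, (g x).2 < n) (hu : u ≤ (T g j).card + 1) :
    ∀ x, (fwdRaw g j u x).2 < n + 1 := by
  intro x
  cases x using Fin.lastCases with
  | last =>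
    have := t_le g j
    simp only [fwdRaw_last]
    omega
  | cast x =>
    have h1 := hr x
    simp only [fwdRaw_castSucc, Fwd]
    split_ifs with h2 h3
    · simpa using by omega
    · have hx := rk_lt_t hb x
      rw [h3] at hx
      have hsum := t_add_t_le g (s := j) (s' := j + 1) (by omega)
      dsimp only
      omega
    · simpa using by omega

/-! ### The forward map preserves the BPA condition -/

lemma fwdRaw_NBPA {n : ℕ} {g : Fin n → ℕ × ℕ} {j u : ℕ} (hb : NBPA g)
    (h1 : (T g j).card ≤ u) (h2 : u ≤ (T g j).card + 1) (h3 : 1 ≤ u) :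
    NBPA (fwdRaw g j u) := by
  have claimA : ∀ q < (T g j).card, q ∈ T (fwdRaw g j u) j := by
    intro q hq
    obtain ⟨y, hy1, hy2⟩ := exists_rank hb hq
    refine mem_T.mpr ⟨y.castSucc, ?_, ?_⟩ <;>
      simp [fwdRaw_castSucc, Fwd, hy1, hy2]
  intro x q hq
  cases x using Fin.lastCases with
  | last =>
    simp only [fwdRaw_last] at hq ⊢
    exact claimA q (by omega)
  | cast x =>
    simp only [fwdRaw_castSucc, Fwd] at hq ⊢
    split_ifs at hq ⊢ with hc1 hc2
    · -- s₀ ≤ j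
      obtain ⟨y, hy1, hy2⟩ := mem_T.mp (hb x q hq)
      refine mem_T.mpr ⟨y.castSucc, ?_, ?_⟩ <;>
        simp [fwdRaw_castSucc, Fwd, hy1, hy2, hc1]
    · -- s₀ = j + 1
      dsimp only at hq
      by_cases hq1 : q < (T g j).card
      · exact claimA q hq1
      · by_cases hq2 : q = u - 1
        · subst hq2
          exact mem_T.mpr ⟨Fin.last n, by simp, by simp⟩
        · have hqu : u ≤ q := by omega
          have : q - u < (g x).2 := by omega
          obtain ⟨y, hy1, hy2⟩ := mem_T.mp (hb x _ this)
          rw [hc2] at hy1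
          refine mem_T.mpr ⟨y.castSucc, ?_, ?_⟩ <;>
            simp [fwdRaw_castSucc, Fwd, hy1, hy2] <;> omega
    · -- s₀ ≥ j + 2
      obtain ⟨y, hy1, hy2⟩ := mem_T.mp (hb x q hq)
      refine mem_T.mpr ⟨y.castSucc, ?_, ?_⟩ <;>
        simp [fwdRaw_castSucc, Fwd, hy1, hy2, hc1, hc2]

end BPAAux

namespace BPAAux

open Finset

lemma invRaw_sec_lt {n M : ℕ} {g' : Fin (n + 1) → ℕ × ℕ}
    (hs : ∀ x, (g' x).1 < M + 1) : ∀ x, (invRaw g' x).1 < M + 2 := by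
  intro x
  have h1 := hs x.castSucc
  have h2 := hs (Fin.last n)
  simp only [invRaw, Inv]
  split_ifs <;> (try simp) <;> omega

lemma invRaw_rk_lt {n : ℕ} {g' : Fin (n + 1) → ℕ × ℕ} (hb : NBPA g')
    (hr : ∀ x, (g' x).2 < n + 1) : ∀ x, (invRaw g' x).2 < n := by
  intro x
  have hlast := rk_lt_t hb (Fin.last n)
  simp only [invRaw, Inv]
  split_ifs with hc1 hc2 hc3
  · -- s₀ < s
    have hx := rk_lt_t hb x.castSucc
    have hsum := t_add_t_le g' (s := (g' x.castSucc).1) (s' := (g' (Fin.last n)).1) (by omega)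
    omega
  · -- s₀ = s, r₀ ≤ r
    by_cases hrr : (g' x.castSucc).2 = (g' (Fin.last n)).2
    · have hdup : g' x.castSucc = g' (Fin.last n) := Prod.ext hc2 hrr
      have hne : x.castSucc ≠ Fin.last n := Fin.ne_last_of_lt x.castSucc_lt_last
      have := t_lt_of_dup hne hdup
      have hx := rk_lt_t hb x.castSucc
      omega
    · have := hr (Fin.last n)
      omega
  · -- s₀ = s, r₀ > r
    have := hr x.castSucc
    omega
  · -- s₀ > s
    have hx := rk_lt_t hb x.castSucc
    have hsum := t_add_t_le g' (s := (g' x.castSucc).1) (s' := (g' (Fin.last n)).1) (by omega)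
    omega

lemma invRaw_NBPA {n : ℕ} {g' : Fin (n + 1) → ℕ × ℕ} (hb : NBPA g') :
    NBPA (invRaw g') := by
  intro x q hq
  set s := (g' (Fin.last n)).1 with hs_def
  set r := (g' (Fin.last n)).2 with hr_def
  simp only [invRaw, Inv] at hq ⊢
  split_ifs at hq ⊢ with hc1 hc2 hc3
  · -- s₀ < s
    obtain ⟨y', hy1, hy2⟩ := mem_T.mp (hb x.castSucc q hq)
    have hne : y' ≠ Fin.last n := by
      intro h; rw [h] at hy1; omega
    obtain ⟨y, rfl⟩ := Fin.exists_castSucc_eq.mpr hne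
    refine mem_T.mpr ⟨y, ?_, ?_⟩ <;>
      simp only [invRaw, Inv, hy1, hy2, ← hs_def, ← hr_def] <;>
      split_ifs <;> (try simp) <;> omega
  · -- s₀ = s, r₀ ≤ r
    obtain ⟨y', hy1, hy2⟩ := mem_T.mp (hb x.castSucc q hq)
    rw [hc2] at hy1
    have hqr : q < r := by omega
    have hne : y' ≠ Fin.last n := by
      intro h; rw [h] at hy2; omega
    obtain ⟨y, rfl⟩ := Fin.exists_castSucc_eq.mpr hne
    refine mem_T.mpr ⟨y, ?_, ?_⟩ <;>
      simp only [invRaw, Inv, hy1, hy2, ← hs_def, ← hr_def] <;>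
      split_ifs <;> (try simp) <;> omega
  · -- s₀ = s, r₀ > r
    dsimp only at hq
    have hq' : q + r + 1 < (g' x.castSucc).2 := by omega
    obtain ⟨y', hy1, hy2⟩ := mem_T.mp (hb x.castSucc _ hq')
    rw [hc2] at hy1
    have hne : y' ≠ Fin.last n := by
      intro h; rw [h] at hy2; omega
    obtain ⟨y, rfl⟩ := Fin.exists_castSucc_eq.mpr hne
    refine mem_T.mpr ⟨y, ?_, ?_⟩ <;>
      simp only [invRaw, Inv, hy1, hy2, ← hs_def, ← hr_def] <;>
      split_ifs <;> (try simp) <;> omega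
  · -- s₀ > s
    obtain ⟨y', hy1, hy2⟩ := mem_T.mp (hb x.castSucc q hq)
    have hne : y' ≠ Fin.last n := by
      intro h; rw [h] at hy1; omega
    obtain ⟨y, rfl⟩ := Fin.exists_castSucc_eq.mpr hne
    refine mem_T.mpr ⟨y, ?_, ?_⟩ <;>
      simp only [invRaw, Inv, hy1, hy2, ← hs_def, ← hr_def] <;>
      split_ifs <;> (try simp) <;> omega

end BPAAux

namespace BPAAux

open Finset

abbrev Sub (M n : ℕ) := { f : Fin n → Fin (M + 1) × Fin n // IsBPA M n f }

def toFun (m ℓ : ℕ) (w : Fin 2 × Fin (m + 1) × Sub (m + 1) ℓ) :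
    Sub m (ℓ + 1) ⊕ (Fin (m + 1) × Sub m ℓ) :=
  have hb : NBPA (rawOf w.2.2.1) := NBPA_of_isBPA w.2.2.2
  have hs : ∀ x, (rawOf w.2.2.1 x).1 < m + 2 := fun x => (w.2.2.1 x).1.isLt
  have hr : ∀ x, (rawOf w.2.2.1 x).2 < ℓ := fun x => (w.2.2.1 x).2.isLt
  if hdiv : (w.1 : ℕ) = 1 ∧ (T (rawOf w.2.2.1) w.2.1).card = 0 then
    .inr (w.2.1, ⟨pack (sqRaw w.2.1 (rawOf w.2.2.1))
      (fun x => by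
        have h1 := hs x; have h2 := w.2.1.isLt
        simp only [sqRaw]; split_ifs <;> omega)
      (fun x => hr x),
      isBPA_pack _ _ (sqRaw_NBPA _ hb)⟩)
  else
    .inl ⟨pack (fwdRaw (rawOf w.2.2.1) w.2.1 ((T (rawOf w.2.2.1) w.2.1).card + 1 - w.1))
      (fwdRaw_sec_lt w.2.1.isLt hs)
      (fwdRaw_rk_lt hb hr (by omega))
      , isBPA_pack _ _ (fwdRaw_NBPA hb
          (by have := w.1.isLt; omega)
          (by omega)
          (by have h1 := w.1.isLt
              rw [not_and_or] at hdiv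
              rcases hdiv with h | h <;> omega))⟩

def invFun (m ℓ : ℕ) (w : Sub m (ℓ + 1) ⊕ (Fin (m + 1) × Sub m ℓ)) :
    Fin 2 × Fin (m + 1) × Sub (m + 1) ℓ :=
  match w with
  | .inl f' =>
    have hb : NBPA (rawOf f'.1) := NBPA_of_isBPA f'.2
    have hs : ∀ x, (rawOf f'.1 x).1 < m + 1 := fun x => (f'.1 x).1.isLt
    have hr : ∀ x, (rawOf f'.1 x).2 < ℓ + 1 := fun x => (f'.1 x).2.isLt
    ( if ∃ x : Fin ℓ, rawOf f'.1 x.castSucc = rawOf f'.1 (Fin.last ℓ) then 1 else 0,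
      ⟨(rawOf f'.1 (Fin.last ℓ)).1, hs _⟩,
      ⟨pack (invRaw (rawOf f'.1)) (invRaw_sec_lt hs) (invRaw_rk_lt hb hr),
        isBPA_pack _ _ (invRaw_NBPA hb)⟩ )
  | .inr (j, f) =>
    have hb : NBPA (rawOf f.1) := NBPA_of_isBPA f.2
    have hs : ∀ x, (rawOf f.1 x).1 < m + 1 := fun x => (f.1 x).1.isLt
    have hr : ∀ x, (rawOf f.1 x).2 < ℓ := fun x => (f.1 x).2.isLt
    (1, j, ⟨pack (liftRaw j (rawOf f.1))
      (fun x => by have := hs x; simp only [liftRaw]; split_ifs <;> omega)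
      (fun x => hr x),
      isBPA_pack _ _ (liftRaw_NBPA _ hb)⟩)

end BPAAux

namespace BPAAux

open Finset

lemma pack_eq_of_raw {M n : ℕ} {g : Fin n → ℕ × ℕ} {f : Fin n → Fin (M + 1) × Fin n}
    (h : g = rawOf f) (h1 h2) : pack g h1 h2 = f := by
  subst h; exact pack_rawOf f _ _

lemma Fwd_le {j u : ℕ} {p : ℕ × ℕ} (h : p.1 ≤ j) : Fwd j u p = p := by
  rw [Fwd, if_pos h]

lemma Fwd_succ {j u : ℕ} {p : ℕ × ℕ} (h : p.1 = j + 1) : Fwd j u p = (j, p.2 + u) := by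
  rw [Fwd, if_neg (by omega), if_pos h]

lemma Fwd_gt {j u : ℕ} {p : ℕ × ℕ} (h : j + 1 < p.1) : Fwd j u p = (p.1 - 1, p.2) := by
  rw [Fwd, if_neg (by omega), if_neg (by omega)]

lemma Inv_lt {s r : ℕ} {p : ℕ × ℕ} (h : p.1 < s) : Inv s r p = p := by
  rw [Inv, if_pos h]

lemma Inv_eq_le {s r : ℕ} {p : ℕ × ℕ} (h : p.1 = s) (h2 : p.2 ≤ r) : Inv s r p = p := by
  rw [Inv, if_neg (by omega), if_pos h, if_pos h2]

lemma Inv_eq_gt {s r : ℕ} {p : ℕ × ℕ} (h : p.1 = s) (h2 : r < p.2) :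
    Inv s r p = (s + 1, p.2 - r - 1) := by
  rw [Inv, if_neg (by omega), if_pos h, if_neg (by omega)]

lemma Inv_gt {s r : ℕ} {p : ℕ × ℕ} (h : s < p.1) : Inv s r p = (p.1 + 1, p.2) := by
  rw [Inv, if_neg (by omega), if_neg (by omega)]

/-- L1 : splitting undoes merging. -/
lemma inv_fwd {n : ℕ} {g : Fin n → ℕ × ℕ} {j u : ℕ} (hb : NBPA g)
    (h1 : (T g j).card ≤ u) (h3 : 1 ≤ u) : invRaw (fwdRaw g j u) = g := by
  funext x
  have hx := rk_lt_t hb x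
  simp only [invRaw, fwdRaw_last, fwdRaw_castSucc]
  rcases Nat.lt_trichotomy (g x).1 j with hc | hc | hc
  · rw [Fwd_le (by omega), Inv_lt (by omega)]
  · rw [hc] at hx
    rw [Fwd_le (by omega), Inv_eq_le (by omega) (by omega)]
  · by_cases hc2 : (g x).1 = j + 1
    · rw [Fwd_succ hc2, Inv_eq_gt (by simp) (by simp; omega)]
      refine Prod.ext (by simp; omega) (by simp; omega)
    · rw [Fwd_gt (by omega), Inv_gt (by simp; omega)]
      refine Prod.ext (by simp; omega) (by simp)

/-- L2a : in the `ε = 0` case the new element is alone in its block. -/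
lemma not_exists_fwd {n : ℕ} {g : Fin n → ℕ × ℕ} {j : ℕ} (hb : NBPA g) :
    ¬ ∃ x : Fin n, fwdRaw g j ((T g j).card + 1) x.castSucc
      = fwdRaw g j ((T g j).card + 1) (Fin.last n) := by
  rintro ⟨x, hx⟩
  have hrk := rk_lt_t hb x
  simp only [fwdRaw_castSucc, fwdRaw_last, Nat.add_sub_cancel] at hx
  rcases Nat.lt_trichotomy (g x).1 j with hc | hc | hc
  · rw [Fwd_le (by omega)] at hx
    rw [Prod.ext_iff] at hx
    omega
  · rw [Fwd_le (by omega)] at hx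
    rw [Prod.ext_iff] at hx
    rw [hc] at hrk
    omega
  · by_cases hc2 : (g x).1 = j + 1
    · rw [Fwd_succ hc2] at hx
      rw [Prod.ext_iff] at hx
      simp at hx
      omega
    · rw [Fwd_gt (by omega)] at hx
      rw [Prod.ext_iff] at hx
      simp at hx
      omega

/-- L2b : in the `ε = 1` case the new element shares its block. -/
lemma exists_fwd {n : ℕ} {g : Fin n → ℕ × ℕ} {j : ℕ} (hb : NBPA g)
    (ht : 1 ≤ (T g j).card) :
    ∃ x : Fin n, fwdRaw g j ((T g j).card) x.castSucc
      = fwdRaw g j ((T g j).card) (Fin.last n) := by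
  obtain ⟨y, hy1, hy2⟩ := exists_rank hb (s := j) (q := (T g j).card - 1) (by omega)
  refine ⟨y, ?_⟩
  simp only [fwdRaw_castSucc, fwdRaw_last]
  rw [Fwd_le (by omega)]
  exact Prod.ext hy1 hy2

/-- L3 : lifting undoes squashing an empty section. -/
lemma lift_sq {n : ℕ} {g : Fin n → ℕ × ℕ} {j : ℕ} (h : ∀ x, (g x).1 ≠ j) :
    liftRaw j (sqRaw j g) = g := by
  funext x
  have hx := h x
  refine Prod.ext ?_ rfl
  simp only [liftRaw, sqRaw]
  split_ifs <;> omega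

/-- R2 : squashing undoes lifting. -/
lemma sq_lift {n : ℕ} (g : Fin n → ℕ × ℕ) (j : ℕ) : sqRaw j (liftRaw j g) = g := by
  funext x
  refine Prod.ext ?_ rfl
  simp only [liftRaw, sqRaw]
  split_ifs <;> omega

/-- R3 : after lifting, section `j` is empty. -/
lemma t_lift_eq_zero {n : ℕ} (g : Fin n → ℕ × ℕ) (j : ℕ) :
    (T (liftRaw j g) j).card = 0 := by
  rw [t_eq_zero_iff]
  intro x
  simp only [liftRaw]
  split_ifs <;> omega

/-- R1 : merging undoes splitting. -/
lemma fwd_inv {n : ℕ} (g' : Fin (n + 1) → ℕ × ℕ) :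
    fwdRaw (invRaw g') (g' (Fin.last n)).1 ((g' (Fin.last n)).2 + 1) = g' := by
  funext z
  cases z using Fin.lastCases with
  | last => simp only [fwdRaw_last, Nat.add_sub_cancel]
  | cast x =>
    simp only [fwdRaw_castSucc, invRaw]
    rcases Nat.lt_trichotomy (g' x.castSucc).1 (g' (Fin.last n)).1 with hc | hc | hc
    · rw [Inv_lt hc, Fwd_le (by omega)]
    · by_cases hc2 : (g' x.castSucc).2 ≤ (g' (Fin.last n)).2
      · rw [Inv_eq_le hc hc2, Fwd_le (by omega)]
      · rw [Inv_eq_gt hc (by omega), Fwd_succ (by simp)]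
        refine Prod.ext (by simp; omega) (by simp; omega)
    · rw [Inv_gt hc, Fwd_gt (by simp; omega)]
      refine Prod.ext (by simp) (by simp)

end BPAAux

namespace BPAAux

open Finset

/-- R0 : the ranks used in the distinguished section after splitting. -/
lemma T_invRaw {n : ℕ} {g' : Fin (n + 1) → ℕ × ℕ} (hb : NBPA g') :
    T (invRaw g') (g' (Fin.last n)).1 =
      if ∃ x : Fin n, g' x.castSucc = g' (Fin.last n)
      then Finset.range ((g' (Fin.last n)).2 + 1)
      else Finset.range (g' (Fin.last n)).2 := by
  have hlast := rk_lt_t hb (Fin.last n)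
  ext q
  constructor
  · intro hq
    obtain ⟨y, hy1, hy2⟩ := mem_T.mp hq
    rw [invRaw] at hy1 hy2
    rcases Nat.lt_trichotomy (g' y.castSucc).1 (g' (Fin.last n)).1 with hc | hc | hc
    · rw [Inv_lt hc] at hy1; omega
    · by_cases hc2 : (g' y.castSucc).2 ≤ (g' (Fin.last n)).2
      · rw [Inv_eq_le hc hc2] at hy1 hy2
        by_cases hqr : q = (g' (Fin.last n)).2
        · have hex : ∃ x : Fin n, g' x.castSucc = g' (Fin.last n) :=
            ⟨y, Prod.ext hc (by omega)⟩
          rw [if_pos hex]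
          simp; omega
        · split_ifs <;> simp <;> omega
      · rw [Inv_eq_gt hc (by omega)] at hy1
        simp at hy1
    · rw [Inv_gt hc] at hy1
      simp at hy1
      omega
  · intro hq
    have hqle : q < (g' (Fin.last n)).2 + 1 := by
      split_ifs at hq <;> simp at hq <;> omega
    by_cases hqr : q = (g' (Fin.last n)).2
    · have hex : ∃ x : Fin n, g' x.castSucc = g' (Fin.last n) := by
        by_contra hno
        rw [if_neg hno] at hq
        simp at hq
        omega
      obtain ⟨x, hx⟩ := hex
      refine mem_T.mpr ⟨x, ?_, ?_⟩ <;>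
        rw [invRaw, hx, Inv_eq_le rfl (le_refl _)] <;> omega
    · -- q < r
      have hql : q < (g' (Fin.last n)).2 := by omega
      obtain ⟨y', hy1, hy2⟩ := exists_rank hb (s := (g' (Fin.last n)).1) (q := q) (by omega)
      have hne : y' ≠ Fin.last n := by intro h; rw [h] at hy2; omega
      obtain ⟨y, rfl⟩ := Fin.exists_castSucc_eq.mpr hne
      refine mem_T.mpr ⟨y, ?_, ?_⟩ <;>
        rw [invRaw, Inv_eq_le hy1 (by omega)] <;> omega

lemma t_invRaw {n : ℕ} {g' : Fin (n + 1) → ℕ × ℕ} (hb : NBPA g') :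
    (T (invRaw g') (g' (Fin.last n)).1).card =
      if ∃ x : Fin n, g' x.castSucc = g' (Fin.last n)
      then (g' (Fin.last n)).2 + 1
      else (g' (Fin.last n)).2 := by
  rw [T_invRaw hb]
  split_ifs <;> simp

end BPAAux

namespace BPAAux

open Finset

lemma left_inv (m ℓ : ℕ) : ∀ w, invFun m ℓ (toFun m ℓ w) = w := by
  rintro ⟨ε, j, f⟩
  have hb : NBPA (rawOf f.1) := NBPA_of_isBPA f.2
  have hε := ε.isLt
  by_cases hdiv : (ε : ℕ) = 1 ∧ (T (rawOf f.1) (j : ℕ)).card = 0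
  · rw [toFun, dif_pos hdiv, invFun]
    refine Prod.ext ?_ (Prod.ext rfl (Subtype.ext ?_))
    · exact (Fin.ext hdiv.1.symm : (1 : Fin 2) = ε)
    · dsimp only
      refine pack_eq_of_raw ?_ _ _
      refine (congrArg (liftRaw (j : ℕ)) (rawOf_pack _ _ _)).trans ?_
      exact lift_sq (t_eq_zero_iff.mp hdiv.2)
  · rw [toFun, dif_neg hdiv, invFun]
    have hu1 : (T (rawOf f.1) (j : ℕ)).card ≤ (T (rawOf f.1) (j : ℕ)).card + 1 - (ε : ℕ) := by
      omega
    have hu3 : 1 ≤ (T (rawOf f.1) (j : ℕ)).card + 1 - (ε : ℕ) := by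
      by_cases h : (ε : ℕ) = 1
      · have := (not_and_or.mp hdiv).resolve_left (by simp [h])
        omega
      · omega
    simp only [rawOf_pack]
    refine Prod.ext ?_ (Prod.ext ?_ (Subtype.ext ?_))
    · -- the `Fin 2` component
      dsimp only
      by_cases h : (ε : ℕ) = 1
      · have ht : 1 ≤ (T (rawOf f.1) (j : ℕ)).card := by
          have := (not_and_or.mp hdiv).resolve_left (by simp [h])
          omega
        have hu : (T (rawOf f.1) (j : ℕ)).card + 1 - (ε : ℕ)
            = (T (rawOf f.1) (j : ℕ)).card := by omega
        rw [hu, if_pos (exists_fwd hb ht)]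
        exact Fin.ext h.symm
      · have hu : (T (rawOf f.1) (j : ℕ)).card + 1 - (ε : ℕ)
            = (T (rawOf f.1) (j : ℕ)).card + 1 := by omega
        rw [hu, if_neg (not_exists_fwd hb)]
        exact Fin.ext (by omega)
    · -- the `Fin (m+1)` component
      dsimp only
      refine Fin.ext ?_
      rw [Fin.val_mk, fwdRaw_last]
    · -- the function component
      dsimp only
      refine pack_eq_of_raw ?_ _ _
      exact inv_fwd hb hu1 hu3

lemma left_inv2 (m ℓ : ℕ) : ∀ w, toFun m ℓ (invFun m ℓ w) = w := by
  rintro (f' | ⟨j, f⟩)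
  · have hb : NBPA (rawOf f'.1) := NBPA_of_isBPA f'.2
    rw [invFun, toFun]
    simp only [rawOf_pack]
    have hval : ∀ c : Prop, ∀ inst : Decidable c,
        (((if c then (1 : Fin 2) else 0) : Fin 2) : ℕ) = if c then 1 else 0 := by
      intro c inst; split_ifs <;> rfl
    by_cases hc : ∃ x : Fin ℓ, rawOf f'.1 x.castSucc = rawOf f'.1 (Fin.last ℓ)
    · rw [dif_neg]
      · refine congrArg Sum.inl (Subtype.ext ?_)
        dsimp only
        refine pack_eq_of_raw ?_ _ _
        simp only [rawOf_pack]
        rw [hval, if_pos hc, t_invRaw hb, if_pos hc]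
        have harith : (rawOf f'.1 (Fin.last ℓ)).2 + 1 + 1 - 1
            = (rawOf f'.1 (Fin.last ℓ)).2 + 1 := by omega
        rw [harith]
        exact fwd_inv (rawOf f'.1)
      · rw [hval, if_pos hc, t_invRaw hb, if_pos hc]
        simp
    · rw [dif_neg]
      · refine congrArg Sum.inl (Subtype.ext ?_)
        dsimp only
        refine pack_eq_of_raw ?_ _ _
        simp only [rawOf_pack]
        rw [hval, if_neg hc, t_invRaw hb, if_neg hc, Nat.sub_zero]
        exact fwd_inv (rawOf f'.1)
      · rw [hval, if_neg hc]
        intro hcon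
        exact absurd hcon.1 (by omega)
  · have hb : NBPA (rawOf f.1) := NBPA_of_isBPA f.2
    rw [invFun, toFun, dif_pos]
    · refine congrArg Sum.inr (Prod.ext rfl (Subtype.ext ?_))
      dsimp only
      refine pack_eq_of_raw ?_ _ _
      refine (congrArg (sqRaw (j : ℕ)) (rawOf_pack _ _ _)).trans ?_
      exact sq_lift (rawOf f.1) (j : ℕ)
    · refine ⟨rfl, ?_⟩
      dsimp only
      refine (congrArg (fun g : Fin ℓ → ℕ × ℕ => (T g (j : ℕ)).card) (rawOf_pack _ _ _)).trans ?_
      exact t_lift_eq_zero (rawOf f.1) (j : ℕ)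

end BPAAux

namespace BPAAux

open Finset

set_option synthInstance.maxHeartbeats 1000000 in
set_option maxHeartbeats 1000000 in
/-- The key recurrence: `r_{m,ℓ+1} + (m+1) r_{m,ℓ} = 2 (m+1) r_{m+1,ℓ}`. -/
lemma star (m ℓ : ℕ) :
    bpa m (ℓ + 1) + (m + 1) * bpa m ℓ = 2 * ((m + 1) * bpa (m + 1) ℓ) := by
  have e : (Sub m (ℓ + 1) ⊕ (Fin (m + 1) × Sub m ℓ)) ≃
      (Fin 2 × Fin (m + 1) × Sub (m + 1) ℓ) :=
    { toFun := invFun m ℓ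
      invFun := toFun m ℓ
      left_inv := left_inv2 m ℓ
      right_inv := left_inv m ℓ }
  have h := Fintype.card_congr e
  rw [Fintype.card_sum, Fintype.card_prod, Fintype.card_prod, Fintype.card_prod,
    Fintype.card_fin, Fintype.card_fin] at h
  exact h

lemma stirling1_eq_zero_of_lt : ∀ {n k : ℕ}, n < k → stirling1 n k = 0
  | 0, k + 1, _ => rfl
  | n + 1, k + 1, h => by
    rw [stirling1]
    rw [stirling1_eq_zero_of_lt (by omega), stirling1_eq_zero_of_lt (by omega)]
    ring

end BPAAux

theorem bpa_eq_sum_stirling1' (m ℓ : ℕ) :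
    2 ^ m * Nat.factorial m * bpa m ℓ =
      ∑ i ∈ Finset.range (m + 1), stirling1 (m + 1) (i + 1) * bpa 0 (ℓ + i) := by
  induction m generalizing ℓ with
  | zero =>
    simp [stirling1, Nat.factorial]
  | succ m ih =>
    have hstar := BPAAux.star m ℓ
    have key : 2 ^ (m + 1) * Nat.factorial (m + 1) * bpa (m + 1) ℓ
        = 2 ^ m * Nat.factorial m * bpa m (ℓ + 1)
          + (m + 1) * (2 ^ m * Nat.factorial m * bpa m ℓ) := by
      have h2 : 2 ^ (m + 1) * Nat.factorial (m + 1) * bpa (m + 1) ℓ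
          = 2 ^ m * Nat.factorial m * (2 * ((m + 1) * bpa (m + 1) ℓ)) := by
        rw [Nat.factorial_succ]; ring
      rw [h2, ← hstar]
      ring
    have hsplit : ∀ i : ℕ, stirling1 (m + 2) (i + 1)
        = (m + 1) * stirling1 (m + 1) (i + 1) + stirling1 (m + 1) i := fun i => rfl
    have e1 : ∑ i ∈ Finset.range (m + 2), stirling1 (m + 2) (i + 1) * bpa 0 (ℓ + i)
        = ∑ i ∈ Finset.range (m + 2),
            ((m + 1) * (stirling1 (m + 1) (i + 1) * bpa 0 (ℓ + i))
              + stirling1 (m + 1) i * bpa 0 (ℓ + i)) :=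
      Finset.sum_congr rfl (fun i _ => by rw [hsplit i]; ring)
    have e2 : ∑ i ∈ Finset.range (m + 2), (m + 1) * (stirling1 (m + 1) (i + 1) * bpa 0 (ℓ + i))
        = (m + 1) * (2 ^ m * Nat.factorial m * bpa m ℓ) := by
      rw [Finset.sum_range_succ, BPAAux.stirling1_eq_zero_of_lt (show m + 1 < m + 2 by omega),
        ← Finset.mul_sum, ← ih ℓ]
      simp
    have e3 : ∑ i ∈ Finset.range (m + 2), stirling1 (m + 1) i * bpa 0 (ℓ + i)
        = 2 ^ m * Nat.factorial m * bpa m (ℓ + 1) := by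
      rw [Finset.sum_range_succ' (fun i => stirling1 (m + 1) i * bpa 0 (ℓ + i)) (m + 1)]
      have h0 : stirling1 (m + 1) 0 = 0 := rfl
      have e4 : ∑ i ∈ Finset.range (m + 1), stirling1 (m + 1) (i + 1) * bpa 0 (ℓ + (i + 1))
          = ∑ i ∈ Finset.range (m + 1), stirling1 (m + 1) (i + 1) * bpa 0 ((ℓ + 1) + i) :=
        Finset.sum_congr rfl (fun i _ => by rw [show ℓ + (i + 1) = (ℓ + 1) + i by omega])
      rw [h0, e4, ← ih (ℓ + 1)]
      simp
    show _ = ∑ i ∈ Finset.range (m + 2), stirling1 (m + 2) (i + 1) * bpa 0 (ℓ + i)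
    rw [key, e1, Finset.sum_add_distrib, e2, e3]
    omega


/-- For every `m ≥ 0` and `ℓ ≥ 0`,
`2^m · m! · r_{m,ℓ} = ∑_{i=0}^{m} c(m+1, i+1) · r_{ℓ+i}`. -/
theorem bpa_eq_sum_stirling1 (m ℓ : ℕ) :
    2 ^ m * Nat.factorial m * bpa m ℓ =
      ∑ i ∈ Finset.range (m + 1), stirling1 (m + 1) (i + 1) * bpa 0 (ℓ + i) :=
  bpa_eq_sum_stirling1' m ℓ
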